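/- For every graph G = (V,E) with V = {v_1,…,v_n̂} and E = {e_1,…,e_m̂} and every integer h ≥ 0: G has a vertex cover of size at most h (a set V' ⊆ V with |V'| ≤ h meeting every edge) if and only if there is a capacity increase vector r : W → ℕ with Σ_w r(w) ≤ m̂ + h such that the instance I(G) with capacities q + r admits a stable and perfect matching. -/

import Mathlib

/-!
Basic framework for many-to-one matching (MM) instances with two-sided
preferences, following the paper "Optimal Capacity Modification for
Many-to-One Matching Problems".

Preference/priority orders are encoded by rank functions (`rkS`, `rkW`):
a smaller rank means more preferred; ranks are required to be injective
on the respective sets of acceptable partners.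
-/

structure MM (U W : Type*) [Fintype U] [Fintype W] [DecidableEq U] [DecidableEq W] where
  /-- acceptable schools of a student -/
  accS : U → Finset W
  /-- students on a school's priority list -/
  accW : W → Finset U
  /-- every student has a nonempty preference list -/
  acc_ne : ∀ u, (accS u).Nonempty
  /-- mutual acceptability -/
  acc_iff : ∀ u w, u ∈ accW w ↔ w ∈ accS u
  /-- rank of a school in a student's list (smaller = better) -/
  rkS : U → W → ℕ
  /-- rank of a student in a school's priority list (smaller = better) -/
  rkW : W → U → ℕ
  rkS_inj : ∀ u, ∀ w1 ∈ accS u, ∀ w2 ∈ accS u, rkS u w1 = rkS u w2 → w1 = w2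
  rkW_inj : ∀ w, ∀ u1 ∈ accW w, ∀ u2 ∈ accW w, rkW w u1 = rkW w u2 → u1 = u2
  /-- capacities -/
  q : W → ℕ
  q_pos : ∀ w, 1 ≤ q w

namespace MM

variable {U W : Type*} [Fintype U] [Fintype W] [DecidableEq U] [DecidableEq W]

/-- `μ` is a (partial) matching: it assigns only acceptable schools. -/
def IsMatching (I : MM U W) (μ : U → Option W) : Prop :=
  ∀ u w, μ u = some w → w ∈ I.accS u

/-- the set of students assigned to school `w` -/
def assignedTo (μ : U → Option W) (w : W) : Set U := {u | μ u = some w}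

/-- the number of students assigned to school `w` -/
noncomputable def load (μ : U → Option W) (w : W) : ℕ := (assignedTo μ w).ncard

/-- `μ` is feasible: it is a matching respecting all capacities. -/
def Feasible (I : MM U W) (μ : U → Option W) : Prop :=
  I.IsMatching μ ∧ ∀ w, load μ w ≤ I.q w

/-- `μ` is perfect: every student is matched. -/
def Perfect (μ : U → Option W) : Prop := ∀ u, μ u ≠ none

/-- student `u` strictly prefers school `w` to the outcome `o`
(where `o = none` means being unmatched) -/
def PrefOut (I : MM U W) (u : U) (w : W) (o : Option W) : Prop :=
  o = none ∨ ∃ w', o = some w' ∧ I.rkS u w < I.rkS u w'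

/-- `(u,w)` is a blocking pair of `μ` -/
def Blocks (I : MM U W) (μ : U → Option W) (u : U) (w : W) : Prop :=
  u ∈ I.accW w ∧ I.PrefOut u w (μ u) ∧
    (load μ w < I.q w ∨ ∃ u' ∈ assignedTo μ w, I.rkW w u < I.rkW w u')

/-- `μ` is stable: feasible and with no blocking pair -/
def Stable (I : MM U W) (μ : U → Option W) : Prop :=
  I.Feasible μ ∧ ∀ u w, ¬ I.Blocks μ u w

/-- student `u` is strictly better off under `μ` than under `σ` -/
def Better (I : MM U W) (u : U) (μ σ : U → Option W) : Prop :=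
  ∃ w, μ u = some w ∧ I.PrefOut u w (σ u)

/-- student `u` weakly prefers `μ` to `σ` -/
def WeakPref (I : MM U W) (u : U) (μ σ : U → Option W) : Prop :=
  μ u = σ u ∨ I.Better u μ σ

/-- `μ` dominates `σ` -/
def Dominates (I : MM U W) (μ σ : U → Option W) : Prop :=
  (∀ u, I.WeakPref u μ σ) ∧ ∃ u, I.Better u μ σ

/-- `μ` is (Pareto-)efficient: feasible and dominated by no feasible matching -/
def Efficient (I : MM U W) (μ : U → Option W) : Prop :=
  I.Feasible μ ∧ ∀ σ, I.Feasible σ → ¬ I.Dominates σ μ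

/-- `μ` is a student-optimal stable matching -/
def StudentOptimal (I : MM U W) (μ : U → Option W) : Prop :=
  I.Stable μ ∧ ∀ σ, I.Stable σ → ∀ u, I.WeakPref u μ σ

/-- increase capacities by the vector `r` -/
def incCap (I : MM U W) (r : W → ℕ) : MM U W :=
  { I with
    q := fun w => I.q w + r w
    q_pos := fun w => le_trans (I.q_pos w) (Nat.le_add_right _ _) }

/-- replace the capacities by `q'` -/
def withCap (I : MM U W) (q' : W → ℕ) (hq' : ∀ w, 1 ≤ q' w) : MM U W :=
  { I with
    q := q'
    q_pos := hq' }

/-- student `x` justifiedly envies student `y` under `σ` -/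
def JEnvy (I : MM U W) (σ : U → Option W) (x y : U) : Prop :=
  ∃ w, σ y = some w ∧ x ∈ I.accW w ∧ I.rkW w x < I.rkW w y ∧ I.PrefOut x w (σ x)

/-- the set of students unmatched under `μ` -/
def unmatchedSet (μ : U → Option W) : Set U := {u | μ u = none}

/-- `v` is an assignment vector: it assigns to each student unmatched
under `μhat` an acceptable school -/
def IsAsgVec (I : MM U W) (μhat : U → Option W) (v : U → W) : Prop :=
  ∀ u, μhat u = none → v u ∈ I.accS u

/-- `μhat + v` : additionally match every unmatched student `u` to `v u` -/
def extend (μhat : U → Option W) (v : U → W) : U → Option W :=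
  fun u => some ((μhat u).getD (v u))

/-- JE(v): the assigned students who justifiedly envy some unassigned student
under `μhat + v` -/
def JEset (I : MM U W) (μhat : U → Option W) (v : U → W) : Set U :=
  {x | μhat x ≠ none ∧ ∃ y, μhat y = none ∧ I.JEnvy (extend μhat v) x y}

/-- `n_je(v)` -/
noncomputable def nje (I : MM U W) (μhat : U → Option W) (v : U → W) : ℕ :=
  (I.JEset μhat v).ncard

end MM

section VertexCover

/-!
The reduction of Theorem 3.1: from a graph `G` (with `n` vertices, `m` edges,
edge `t` having endpoints `efst t < esnd t`) we build the MM instance `I(G)`.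
-/

variable (n m : ℕ) (efst esnd : Fin m → Fin n)

/-- incidences of `G`: pairs `(v_i, e_t)` with `v_i ∈ e_t` -/
abbrev VCInc := {p : Fin n × Fin m // efst p.2 = p.1 ∨ esnd p.2 = p.1}

/-- schools: a school `v_i^t` for every incidence and a school `w_i`
for every vertex -/
abbrev VCSch := VCInc n m efst esnd ⊕ Fin n

/-- students: an edge-student `e_t` for every edge, a dummy student `d_i^t`
for every incidence, and a student `u_i` for every vertex -/
abbrev VCStu := Fin m ⊕ (VCInc n m efst esnd ⊕ Fin n)

def vcAccS : VCStu n m efst esnd → Finset (VCSch n m efst esnd)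
  | Sum.inl t => {Sum.inl ⟨(efst t, t), Or.inl rfl⟩, Sum.inl ⟨(esnd t, t), Or.inr rfl⟩}
  | Sum.inr (Sum.inl p) => {Sum.inl p}
  | Sum.inr (Sum.inr i) =>
      Finset.univ.filter
        (fun s => Sum.elim (fun p : VCInc n m efst esnd => p.1.1) id s = i)

def vcRkS : VCStu n m efst esnd → VCSch n m efst esnd → ℕ
  | Sum.inl t, Sum.inl p => if p.1.1 = efst t then 0 else 1
  | Sum.inl _, Sum.inr _ => 0
  | Sum.inr (Sum.inl _), _ => 0
  | Sum.inr (Sum.inr _), Sum.inl p => p.1.2.val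
  | Sum.inr (Sum.inr _), Sum.inr _ => m

def vcAccW : VCSch n m efst esnd → Finset (VCStu n m efst esnd)
  | Sum.inl p => {Sum.inr (Sum.inl p), Sum.inr (Sum.inr p.1.1), Sum.inl p.1.2}
  | Sum.inr i => {Sum.inr (Sum.inr i)}

def vcRkW : VCSch n m efst esnd → VCStu n m efst esnd → ℕ
  | Sum.inl _, Sum.inr (Sum.inl _) => 0
  | Sum.inl _, Sum.inr (Sum.inr _) => 1
  | Sum.inl _, Sum.inl _ => 2
  | Sum.inr _, _ => 0

/-- the instance `I(G)` of Theorem 3.1; all capacities are one -/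
def IG (hlt : ∀ t, efst t < esnd t) :
    MM (VCStu n m efst esnd) (VCSch n m efst esnd) where
  accS := vcAccS n m efst esnd
  accW := vcAccW n m efst esnd
  acc_ne := by
    rintro (t | p | i)
    · exact ⟨_, Finset.mem_insert_self _ _⟩
    · exact ⟨_, Finset.mem_singleton_self _⟩
    · exact ⟨Sum.inr i, by simp [vcAccS]⟩
  acc_iff := by
    rintro (t | p' | i') (⟨⟨i0, t0⟩, hp⟩ | i) <;>
      simp [vcAccS, vcAccW, Subtype.ext_iff, Prod.ext_iff] <;> aesop
  rkS := vcRkS n m efst esnd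
  rkW := vcRkW n m efst esnd
  rkS_inj := by
    rintro (t | p' | i') w1 h1 w2 h2 heq
    · simp only [vcAccS, Finset.mem_insert, Finset.mem_singleton] at h1 h2
      have hne : esnd t ≠ efst t := (hlt t).ne'
      rcases h1 with rfl | rfl <;> rcases h2 with rfl | rfl <;>
        simp_all [vcRkS]
    · simp only [vcAccS, Finset.mem_singleton] at h1 h2; rw [h1, h2]
    · rcases w1 with p1 | j1 <;> rcases w2 with p2 | j2 <;>
        simp only [vcAccS, Finset.mem_filter, Sum.elim_inl, Sum.elim_inr,
          id_eq] at h1 h2 <;> simp only [vcRkS] at heq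
      · have : p1.1.2 = p2.1.2 := Fin.val_injective heq
        congr 1
        exact Subtype.ext (Prod.ext (h1.2.trans h2.2.symm) this)
      · exact absurd heq (Nat.ne_of_lt p1.1.2.isLt)
      · exact absurd heq.symm (Nat.ne_of_lt p2.1.2.isLt)
      · rw [h1.2, h2.2]
  rkW_inj := by
    rintro (p | i) u1 h1 u2 h2 heq
    · simp only [vcAccW, Finset.mem_insert, Finset.mem_singleton] at h1 h2
      rcases h1 with rfl | rfl | rfl <;> rcases h2 with rfl | rfl | rfl <;>
        simp_all [vcRkW]
    · simp only [vcAccW, Finset.mem_singleton] at h1 h2; rw [h1, h2]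
  q := fun _ => 1
  q_pos := fun _ => le_rfl

/-! ### Auxiliary material for the proof of Statement 6 -/

lemma vc_load_le_card {U W : Type*} [Fintype U] [DecidableEq U] [DecidableEq W]
    (μ : U → Option W) (w : W) (F : Finset U) (hF : ∀ u, μ u = some w → u ∈ F) :
    MM.load μ w ≤ F.card := by
  rw [MM.load, ← Set.ncard_coe_finset F]
  exact Set.ncard_le_ncard (fun u hu => Finset.mem_coe.2 (hF u hu)) F.finite_toSet

lemma vc_one_le_load {U W : Type*} [Fintype U] (μ : U → Option W) (w : W) (a : U)
    (ha : μ a = some w) : 1 ≤ MM.load μ w := by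
  have h1 : (MM.assignedTo μ w).Nonempty := ⟨a, ha⟩
  have := (Set.ncard_pos (Set.toFinite _)).2 h1
  rw [MM.load]; omega

/-- edges incident to vertex `i` -/
def vcIncE (i : Fin n) : Finset (Fin m) :=
  Finset.univ.filter (fun t => efst t = i ∨ esnd t = i)

lemma mem_vcIncE {i : Fin n} {t : Fin m} :
    t ∈ vcIncE n m efst esnd i ↔ (efst t = i ∨ esnd t = i) := by
  simp [vcIncE]

/-- chosen cover endpoint of edge `t` -/
def vcC (S : Finset (Fin n)) (t : Fin m) : Fin n :=
  if efst t ∈ S then efst t else esnd t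

lemma vcC_end (S : Finset (Fin n)) (t : Fin m) :
    efst t = vcC n m efst esnd S t ∨ esnd t = vcC n m efst esnd S t := by
  unfold vcC; split <;> simp

/-- `p = (i, t)` satisfies `vcQ` iff `i ∈ S` and `t` is the minimum edge
incident to `i` -/
def vcQ (S : Finset (Fin n)) (p : VCInc n m efst esnd) : Prop :=
  p.1.1 ∈ S ∧ p.1.2 ∈ vcIncE n m efst esnd p.1.1 ∧
    ∀ t ∈ vcIncE n m efst esnd p.1.1, p.1.2 ≤ t

instance (S : Finset (Fin n)) : DecidablePred (vcQ n m efst esnd S) := by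
  intro p; unfold vcQ; infer_instance

/-- the capacity increase vector built from a vertex cover `S` -/
def vcR (S : Finset (Fin n)) : VCSch n m efst esnd → ℕ
  | Sum.inl p => (if vcC n m efst esnd S p.1.2 = p.1.1 then 1 else 0) +
      (if vcQ n m efst esnd S p then 1 else 0)
  | Sum.inr _ => 0

/-- the stable perfect matching built from a vertex cover `S` -/
def vcMu (S : Finset (Fin n)) : VCStu n m efst esnd → Option (VCSch n m efst esnd)
  | Sum.inl t => some (Sum.inl ⟨(vcC n m efst esnd S t, t), vcC_end n m efst esnd S t⟩)
  | Sum.inr (Sum.inl p) => some (Sum.inl p)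
  | Sum.inr (Sum.inr i) =>
      if hi : i ∈ S ∧ (vcIncE n m efst esnd i).Nonempty then
        some (Sum.inl ⟨(i, (vcIncE n m efst esnd i).min' hi.2),
          mem_vcIncE n m efst esnd |>.1 ((vcIncE n m efst esnd i).min'_mem hi.2)⟩)
      else some (Sum.inr i)

/-- correctness of the reduction in Theorem 3.1: `G` has a
vertex cover of size at most `h` iff a total capacity increase of at most
`m + h` makes `I(G)` admit a stable and perfect matching. -/
theorem statement_6 (hlt : ∀ t, efst t < esnd t) (h : ℕ) :
    (∃ S : Finset (Fin n), S.card ≤ h ∧ ∀ t, efst t ∈ S ∨ esnd t ∈ S) ↔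
    (∃ r : VCSch n m efst esnd → ℕ, (∑ w, r w) ≤ m + h ∧
      ∃ μ : VCStu n m efst esnd → Option (VCSch n m efst esnd),
        ((IG n m efst esnd hlt).incCap r).Stable μ ∧ MM.Perfect μ) := by
  classical
  have hq : ∀ r w, ((IG n m efst esnd hlt).incCap r).q w = 1 + r w := fun _ _ => rfl
  have haccW : ∀ r, ((IG n m efst esnd hlt).incCap r).accW = vcAccW n m efst esnd :=
    fun _ => rfl
  have haccS : ∀ r, ((IG n m efst esnd hlt).incCap r).accS = vcAccS n m efst esnd :=
    fun _ => rfl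
  have hrkS : ∀ r, ((IG n m efst esnd hlt).incCap r).rkS = vcRkS n m efst esnd :=
    fun _ => rfl
  have hrkW : ∀ r, ((IG n m efst esnd hlt).incCap r).rkW = vcRkW n m efst esnd :=
    fun _ => rfl
  constructor
  · -- Forward direction
    rintro ⟨S, hScard, hScov⟩
    set r := vcR n m efst esnd S with hrdef
    set μ := vcMu n m efst esnd S with hμdef
    have hcS : ∀ t, vcC n m efst esnd S t ∈ S := by
      intro t; unfold vcC; split
      · assumption
      · exact (hScov t).resolve_left ‹_›
    -- characterization of assigned students
    have hchar : ∀ (p : VCInc n m efst esnd) (u : VCStu n m efst esnd),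
        μ u = some (Sum.inl p) →
        u = Sum.inr (Sum.inl p) ∨
        (u = Sum.inl p.1.2 ∧ vcC n m efst esnd S p.1.2 = p.1.1) ∨
        (u = Sum.inr (Sum.inr p.1.1) ∧ vcQ n m efst esnd S p) := by
      rintro p (t | q | i) hu
      · simp only [hμdef, vcMu, Option.some.injEq, Sum.inl.injEq] at hu
        subst hu
        exact Or.inr (Or.inl ⟨rfl, rfl⟩)
      · simp only [hμdef, vcMu, Option.some.injEq, Sum.inl.injEq] at hu
        subst hu; exact Or.inl rfl
      · simp only [hμdef, vcMu] at hu
        split at hu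
        · rename_i hi
          simp only [Option.some.injEq, Sum.inl.injEq] at hu
          subst hu
          exact Or.inr (Or.inr ⟨rfl, hi.1,
            (vcIncE n m efst esnd i).min'_mem hi.2,
            fun t ht => (vcIncE n m efst esnd i).min'_le t ht⟩)
        · simp at hu
    have hdp : ∀ p : VCInc n m efst esnd, μ (Sum.inr (Sum.inl p)) = some (Sum.inl p) :=
      fun p => rfl
    refine ⟨r, ?_, μ, ⟨⟨?_, ?_⟩, ?_⟩, ?_⟩
    · -- total increase is at most m + h
      rw [Fintype.sum_sum_type]
      have h2 : ∀ i : Fin n, vcR n m efst esnd S (Sum.inr i) = 0 := fun _ => rfl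
      simp only [hrdef, h2, Finset.sum_const_zero, add_zero]
      have h3 : ∀ p : VCInc n m efst esnd,
          vcR n m efst esnd S (Sum.inl p) =
          (if vcC n m efst esnd S p.1.2 = p.1.1 then 1 else 0) +
          (if vcQ n m efst esnd S p then 1 else 0) := fun _ => rfl
      simp only [h3, Finset.sum_add_distrib, ← Finset.card_filter]
      have hA : (Finset.univ.filter
          (fun p : VCInc n m efst esnd => vcC n m efst esnd S p.1.2 = p.1.1)).card ≤ m := by
        have h4 : ((Finset.univ : Finset (Fin m))).card = m := by simp
        refine le_trans (Finset.card_le_card_of_injOn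
          (fun p : VCInc n m efst esnd => p.1.2)
          (fun _ _ => Finset.mem_univ _) ?_) (le_of_eq h4)
        intro p hp q hq' hpq
        simp only [Finset.coe_filter, Set.mem_setOf_eq] at hp hq'
        have hpq' : p.1.2 = q.1.2 := hpq
        exact Subtype.ext (Prod.ext (hp.2.symm.trans (by rw [hpq', hq'.2])) hpq')
      have hB : (Finset.univ.filter
          (fun p : VCInc n m efst esnd => vcQ n m efst esnd S p)).card ≤ S.card := by
        refine Finset.card_le_card_of_injOn (fun p : VCInc n m efst esnd => p.1.1) ?_ ?_
        · intro p hp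
          simp only [Finset.mem_coe, Finset.mem_filter] at hp
          exact hp.2.1
        · intro p hp q hq' hpq
          simp only [Finset.coe_filter, Set.mem_setOf_eq] at hp hq'
          have hpq' : p.1.1 = q.1.1 := hpq
          have h1 : p.1.2 ≤ q.1.2 := hp.2.2.2 q.1.2 (by rw [hpq']; exact hq'.2.2.1)
          have h2 : q.1.2 ≤ p.1.2 := hq'.2.2.2 p.1.2 (by rw [← hpq']; exact hp.2.2.1)
          exact Subtype.ext (Prod.ext hpq' (le_antisymm h1 h2))
      omega
    · -- IsMatching
      rintro (t | q | i) w hu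
      · simp only [hμdef, vcMu, Option.some.injEq] at hu
        subst hu
        rcases vcC_end n m efst esnd S t with hc | hc <;>
          simp [haccS, vcAccS, Subtype.ext_iff, Prod.ext_iff, hc]
      · simp only [hμdef, vcMu, Option.some.injEq] at hu
        subst hu
        simp [haccS, vcAccS]
      · simp only [hμdef, vcMu] at hu
        split at hu <;> simp only [Option.some.injEq] at hu <;> subst hu <;>
          simp [haccS, vcAccS]
    · -- capacities respected
      rintro (p | i)
      · have hsub : ∀ u, μ u = some (Sum.inl p) →
            u ∈ insert (Sum.inr (Sum.inl p) : VCStu n m efst esnd)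
              ((if vcC n m efst esnd S p.1.2 = p.1.1 then
                  ({Sum.inl p.1.2} : Finset (VCStu n m efst esnd)) else ∅) ∪
               (if vcQ n m efst esnd S p then
                  ({Sum.inr (Sum.inr p.1.1)} : Finset (VCStu n m efst esnd)) else ∅)) := by
          intro u hu
          rcases hchar p u hu with rfl | ⟨rfl, hc⟩ | ⟨rfl, hc⟩
          · exact Finset.mem_insert_self _ _
          · exact Finset.mem_insert_of_mem (Finset.mem_union_left _ (by simp [hc]))
          · exact Finset.mem_insert_of_mem (Finset.mem_union_right _ (by simp [hc]))
        have := vc_load_le_card μ (Sum.inl p) _ hsub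
        refine le_trans this ?_
        rw [hq, hrdef]
        have h3 : vcR n m efst esnd S (Sum.inl p) =
            (if vcC n m efst esnd S p.1.2 = p.1.1 then 1 else 0) +
            (if vcQ n m efst esnd S p then 1 else 0) := rfl
        rw [h3]
        refine le_trans (Finset.card_insert_le _ _) ?_
        have hcu := Finset.card_union_le
          ((if vcC n m efst esnd S p.1.2 = p.1.1 then
              ({Sum.inl p.1.2} : Finset (VCStu n m efst esnd)) else ∅))
          ((if vcQ n m efst esnd S p then
              ({Sum.inr (Sum.inr p.1.1)} : Finset (VCStu n m efst esnd)) else ∅))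
        have hA2 : ((if vcC n m efst esnd S p.1.2 = p.1.1 then
              ({Sum.inl p.1.2} : Finset (VCStu n m efst esnd)) else ∅)).card =
            (if vcC n m efst esnd S p.1.2 = p.1.1 then 1 else 0) := by
          split_ifs <;> simp
        have hB2 : ((if vcQ n m efst esnd S p then
              ({Sum.inr (Sum.inr p.1.1)} : Finset (VCStu n m efst esnd)) else ∅)).card =
            (if vcQ n m efst esnd S p then 1 else 0) := by
          split_ifs <;> simp
        rw [hA2, hB2] at hcu
        omega
      · have hsub : ∀ u, μ u = some (Sum.inr i) →
            u ∈ ({Sum.inr (Sum.inr i)} : Finset (VCStu n m efst esnd)) := by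
          rintro (t | q | j) hu
          · simp [hμdef, vcMu] at hu
          · simp [hμdef, vcMu] at hu
          · simp only [hμdef, vcMu] at hu
            split at hu
            · simp at hu
            · simp only [Option.some.injEq, Sum.inr.injEq] at hu
              simp [hu]
        have := vc_load_le_card μ (Sum.inr i) _ hsub
        simpa [hq, hrdef, vcR] using this
    · -- no blocking pair
      rintro u w ⟨hacc, hpref, hthird⟩
      rw [haccW] at hacc
      rcases w with p | i
      · -- school v_i^t
        simp only [vcAccW, Finset.mem_insert, Finset.mem_singleton] at hacc
        rcases hacc with rfl | rfl | rfl
        · -- dummy student: matched to its unique school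
          rcases hpref with hnone | ⟨w', hw', hlt'⟩
          · rw [hdp p] at hnone; exact Option.some_ne_none _ hnone
          · rw [hdp p] at hw'
            obtain rfl := Option.some_injective _ hw'
            rw [hrkS] at hlt'
            simp [vcRkS] at hlt'
        · -- vertex student u_{p.1.1}
          have hpinc : p.1.2 ∈ vcIncE n m efst esnd p.1.1 :=
            (mem_vcIncE n m efst esnd).2 p.2
          by_cases hi : p.1.1 ∈ S
          · have hne : (vcIncE n m efst esnd p.1.1).Nonempty := ⟨p.1.2, hpinc⟩
            have hμi : μ (Sum.inr (Sum.inr p.1.1)) =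
                some (Sum.inl ⟨(p.1.1, (vcIncE n m efst esnd p.1.1).min' hne),
                  (mem_vcIncE n m efst esnd).1
                    ((vcIncE n m efst esnd p.1.1).min'_mem hne)⟩) := by
              simp only [hμdef, vcMu]
              rw [dif_pos ⟨hi, hne⟩]
            rcases hpref with hnone | ⟨w', hw', hlt'⟩
            · rw [hμi] at hnone; exact Option.some_ne_none _ hnone
            · rw [hμi] at hw'
              obtain rfl := Option.some_injective _ hw'
              rw [hrkS] at hlt'
              simp only [vcRkS] at hlt'
              have := (vcIncE n m efst esnd p.1.1).min'_le p.1.2 hpinc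
              omega
          · -- p.1.1 ∉ S : school v has only the dummy, priorities rule out blocking
            have hset : ∀ u', μ u' = some (Sum.inl p) → u' = Sum.inr (Sum.inl p) := by
              intro u' hu'
              rcases hchar p u' hu' with rfl | ⟨rfl, hc⟩ | ⟨rfl, hc⟩
              · rfl
              · exact absurd (hc ▸ hcS p.1.2) hi
              · exact absurd hc.1 hi
            rcases hthird with hlt' | ⟨u', hu', hlt'⟩
            · have h1 : 1 ≤ MM.load μ (Sum.inl p) := vc_one_le_load μ _ _ (hdp p)
              have h2 : MM.load μ (Sum.inl p) ≤ 1 := by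
                have := vc_load_le_card μ (Sum.inl p)
                  ({Sum.inr (Sum.inl p)} : Finset (VCStu n m efst esnd))
                  (fun u' hu' => by simp [hset u' hu'])
                simpa using this
              rw [hq, hrdef] at hlt'
              have h3 : vcR n m efst esnd S (Sum.inl p) = 0 := by
                have hc1 : ¬ (vcC n m efst esnd S p.1.2 = p.1.1) :=
                  fun hc => hi (hc ▸ hcS p.1.2)
                have hc2 : ¬ vcQ n m efst esnd S p := fun hc => hi hc.1
                simp [vcR, hc1, hc2]
              omega
            · have := hset u' hu'
              subst this
              rw [hrkW] at hlt'
              simp [vcRkW] at hlt'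
        · -- edge student e_{p.1.2}
          rcases hpref with hnone | ⟨w', hw', hlt'⟩
          · simp [hμdef, vcMu] at hnone
          · have hμe : μ (Sum.inl p.1.2) = some (Sum.inl
                ⟨(vcC n m efst esnd S p.1.2, p.1.2), vcC_end n m efst esnd S p.1.2⟩) := rfl
            rw [hμe] at hw'
            obtain rfl := Option.some_injective _ hw'
            rw [hrkS] at hlt'
            simp only [vcRkS] at hlt'
            have hp1 : p.1.1 = efst p.1.2 := by
              by_contra hne
              simp only [if_neg hne] at hlt'
              split_ifs at hlt' <;> omega
            have hcne : ¬ (vcC n m efst esnd S p.1.2 = efst p.1.2) := by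
              intro hcc
              rw [if_pos hcc] at hlt'
              split_ifs at hlt' <;> omega
            have hiS : efst p.1.2 ∉ S := by
              intro hmem; exact hcne (by simp [vcC, hmem])
            have hset : ∀ u', μ u' = some (Sum.inl p) → u' = Sum.inr (Sum.inl p) := by
              intro u' hu'
              rcases hchar p u' hu' with rfl | ⟨rfl, hc⟩ | ⟨rfl, hc⟩
              · rfl
              · exact absurd ((hc.trans hp1) ▸ hcS p.1.2) hiS
              · exact absurd (hp1 ▸ hc.1) hiS
            rcases hthird with hlt2 | ⟨u', hu', hlt2⟩
            · have h1 : 1 ≤ MM.load μ (Sum.inl p) := vc_one_le_load μ _ _ (hdp p)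
              have h2 : MM.load μ (Sum.inl p) ≤ 1 := by
                have := vc_load_le_card μ (Sum.inl p)
                  ({Sum.inr (Sum.inl p)} : Finset (VCStu n m efst esnd))
                  (fun u' hu' => by simp [hset u' hu'])
                simpa using this
              rw [hq, hrdef] at hlt2
              have h3 : vcR n m efst esnd S (Sum.inl p) = 0 := by
                have hc1 : ¬ (vcC n m efst esnd S p.1.2 = p.1.1) :=
                  fun hcc => hcne (hcc.trans hp1)
                have hc2 : ¬ vcQ n m efst esnd S p := fun hc => hiS (hp1 ▸ hc.1)
                simp [vcR, hc1, hc2]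
              omega
            · have := hset u' hu'
              subst this
              rw [hrkW] at hlt2
              simp [vcRkW] at hlt2
      · -- school w_i : only u_i acceptable, and u_i never strictly prefers w_i
        simp only [vcAccW, Finset.mem_singleton] at hacc
        subst hacc
        by_cases hi : i ∈ S ∧ (vcIncE n m efst esnd i).Nonempty
        · have hμi : μ (Sum.inr (Sum.inr i)) =
              some (Sum.inl ⟨(i, (vcIncE n m efst esnd i).min' hi.2),
                (mem_vcIncE n m efst esnd).1
                  ((vcIncE n m efst esnd i).min'_mem hi.2)⟩) := by
            simp only [hμdef, vcMu]; rw [dif_pos hi]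
          rcases hpref with hnone | ⟨w', hw', hlt'⟩
          · rw [hμi] at hnone; exact Option.some_ne_none _ hnone
          · rw [hμi] at hw'
            obtain rfl := Option.some_injective _ hw'
            rw [hrkS] at hlt'
            simp only [vcRkS] at hlt'
            have := ((vcIncE n m efst esnd i).min' hi.2).isLt
            omega
        · have hμi : μ (Sum.inr (Sum.inr i)) = some (Sum.inr i) := by
            simp only [hμdef, vcMu]; rw [dif_neg hi]
          rcases hpref with hnone | ⟨w', hw', hlt'⟩
          · rw [hμi] at hnone; exact Option.some_ne_none _ hnone
          · rw [hμi] at hw'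
            obtain rfl := Option.some_injective _ hw'
            rw [hrkS] at hlt'
            simp [vcRkS] at hlt'
    · -- perfect
      rintro (t | q | i) <;> simp only [hμdef, vcMu] <;> try exact Option.some_ne_none _
      split <;> exact Option.some_ne_none _
  · -- Reverse direction
    rintro ⟨r, hrsum, μ, ⟨⟨hmat, hcap⟩, hstab⟩, hperf⟩
    rcases Nat.eq_zero_or_pos m with hm | hm
    · exact ⟨∅, by simp, fun t => absurd t.isLt (by omega)⟩
    -- every dummy is matched to its own school
    have hdum : ∀ p : VCInc n m efst esnd,
        μ (Sum.inr (Sum.inl p)) = some (Sum.inl p) := by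
      intro p
      rcases Option.ne_none_iff_exists'.1 (hperf (Sum.inr (Sum.inl p))) with ⟨w, hw⟩
      have := hmat _ _ hw
      rw [haccS] at this
      simp only [vcAccS, Finset.mem_singleton] at this
      rw [hw, this]
    -- every edge student is matched to an endpoint school
    have hedge : ∀ t : Fin m, ∃ p : VCInc n m efst esnd,
        μ (Sum.inl t) = some (Sum.inl p) ∧ p.1.2 = t := by
      intro t
      rcases Option.ne_none_iff_exists'.1 (hperf (Sum.inl t)) with ⟨w, hw⟩
      have := hmat _ _ hw
      rw [haccS] at this
      simp only [vcAccS, Finset.mem_insert, Finset.mem_singleton] at this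
      rcases this with rfl | rfl
      · exact ⟨_, hw, rfl⟩
      · exact ⟨_, hw, rfl⟩
    set S : Finset (Fin n) := Finset.univ.filter
      (fun i => ∃ p : VCInc n m efst esnd,
        μ (Sum.inr (Sum.inr i)) = some (Sum.inl p)) with hSdef
    -- if a school hosting an edge student exists at vertex i, then u_i is matched
    -- to an incidence school (else (u_i, that school) would block)
    have hkey : ∀ (p : VCInc n m efst esnd) (t : Fin m),
        μ (Sum.inl t) = some (Sum.inl p) → p.1.1 ∈ S := by
      intro p t hμt
      by_contra hiS
      rcases Option.ne_none_iff_exists'.1 (hperf (Sum.inr (Sum.inr p.1.1))) with ⟨w, hw⟩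
      have hwacc := hmat _ _ hw
      rw [haccS] at hwacc
      simp only [vcAccS, Finset.mem_filter] at hwacc
      rcases w with p' | j
      · exact hiS (by rw [hSdef]; simp only [Finset.mem_filter]; exact ⟨Finset.mem_univ _, p', hw⟩)
      · have hji : j = p.1.1 := by simpa using hwacc.2
        subst hji
        refine hstab (Sum.inr (Sum.inr p.1.1)) (Sum.inl p) ⟨?_, ?_, ?_⟩
        · rw [haccW]; simp [vcAccW]
        · refine Or.inr ⟨Sum.inr p.1.1, hw, ?_⟩
          rw [hrkS]
          simp only [vcRkS]
          exact p.1.2.isLt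
        · refine Or.inr ⟨Sum.inl t, hμt, ?_⟩
          rw [hrkW]
          simp [vcRkW]
    -- S is a vertex cover
    have hcov : ∀ t, efst t ∈ S ∨ esnd t ∈ S := by
      intro t
      obtain ⟨p, hμt, hpt⟩ := hedge t
      have := hkey p t hμt
      rcases p.2 with he | he
      · left; rw [← hpt, he]; exact this
      · right; rw [← hpt, he]; exact this
    refine ⟨S, ?_, hcov⟩
    -- counting argument : |S| ≤ h
    have p0 : VCInc n m efst esnd := ⟨(efst ⟨0, hm⟩, ⟨0, hm⟩), Or.inl rfl⟩
    set F : Finset (VCStu n m efst esnd) := Finset.univ.filter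
      (fun u => ∃ p : VCInc n m efst esnd, μ u = some (Sum.inl p)) with hFdef
    set f : VCStu n m efst esnd → VCInc n m efst esnd := fun u =>
      if hu : ∃ p : VCInc n m efst esnd, μ u = some (Sum.inl p) then hu.choose else p0
      with hfdef
    -- upper bound on |F|
    have hup : F.card ≤ Fintype.card (VCInc n m efst esnd) + (m + h) := by
      have hfib := Finset.card_eq_sum_card_fiberwise
        (f := f) (s := F) (t := Finset.univ) (fun u _ => Finset.mem_univ _)
      rw [hfib]
      have hstep : ∀ p ∈ (Finset.univ : Finset (VCInc n m efst esnd)),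
          (F.filter (fun u => f u = p)).card ≤ 1 + r (Sum.inl p) := by
        intro p _
        have hsub : ∀ u ∈ F.filter (fun u => f u = p), μ u = some (Sum.inl p) := by
          intro u hu
          simp only [hFdef, Finset.mem_filter, Finset.mem_univ, true_and] at hu
          obtain ⟨⟨p', hp'⟩, hfu⟩ := hu
          have hex : ∃ p : VCInc n m efst esnd, μ u = some (Sum.inl p) := ⟨p', hp'⟩
          rw [hfdef] at hfu
          simp only [dif_pos hex] at hfu
          rw [← hfu]
          exact hex.choose_spec
        have h1 : (F.filter (fun u => f u = p)).card ≤ MM.load μ (Sum.inl p) := by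
          rw [MM.load, ← Set.ncard_coe_finset]
          apply Set.ncard_le_ncard _ (Set.toFinite _)
          intro u hu
          exact hsub u (Finset.mem_coe.1 hu)
        have h2 := hcap (Sum.inl p)
        rw [hq] at h2
        omega
      refine le_trans (Finset.sum_le_sum hstep) ?_
      rw [Finset.sum_add_distrib, Finset.sum_const, Finset.card_univ, smul_eq_mul, mul_one]
      have h3 : ∑ p : VCInc n m efst esnd, r (Sum.inl p) ≤ ∑ w, r w := by
        rw [Fintype.sum_sum_type]
        exact Nat.le_add_right _ _
      omega
    -- lower bound on |F|
    have hlow : m + Fintype.card (VCInc n m efst esnd) + S.card ≤ F.card := by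
      set A : Finset (VCStu n m efst esnd) :=
        Finset.univ.image (Sum.inl : Fin m → VCStu n m efst esnd) with hAdef
      set B : Finset (VCStu n m efst esnd) :=
        (Finset.univ : Finset (VCInc n m efst esnd)).image
          (fun p => Sum.inr (Sum.inl p)) with hBdef
      set C : Finset (VCStu n m efst esnd) :=
        S.image (fun i => Sum.inr (Sum.inr i)) with hCdef
      have hG : A ∪ B ∪ C ⊆ F := by
        intro u hu
        simp only [hAdef, hBdef, hCdef, Finset.mem_union, Finset.mem_image,
          Finset.mem_univ, true_and] at hu
        rcases hu with (⟨t, rfl⟩ | ⟨p, rfl⟩) | ⟨i, hiS, rfl⟩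
        · obtain ⟨p, hμt, _⟩ := hedge t
          rw [hFdef]; simp only [Finset.mem_filter]
          exact ⟨Finset.mem_univ _, p, hμt⟩
        · rw [hFdef]; simp only [Finset.mem_filter]
          exact ⟨Finset.mem_univ _, p, hdum p⟩
        · rw [hSdef] at hiS
          simp only [Finset.mem_filter] at hiS
          rw [hFdef]; simp only [Finset.mem_filter]
          exact ⟨Finset.mem_univ _, hiS.2⟩
      have hd1 : Disjoint A B := by
        rw [Finset.disjoint_left]
        rintro u hu1 hu2
        simp only [hAdef, hBdef, Finset.mem_image, Finset.mem_univ, true_and] at hu1 hu2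
        obtain ⟨t, rfl⟩ := hu1
        obtain ⟨p, hp⟩ := hu2
        exact absurd hp (by simp)
      have hd2 : Disjoint (A ∪ B) C := by
        rw [Finset.disjoint_left]
        rintro u hu1 hu2
        simp only [hAdef, hBdef, hCdef, Finset.mem_union, Finset.mem_image,
          Finset.mem_univ, true_and] at hu1 hu2
        obtain ⟨i, _, rfl⟩ := hu2
        rcases hu1 with ⟨t, ht⟩ | ⟨p, hp⟩
        · exact absurd ht (by simp)
        · exact absurd hp (by simp)
      have hcard := Finset.card_le_card hG
      rw [Finset.card_union_of_disjoint hd2, Finset.card_union_of_disjoint hd1,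
        hAdef, hBdef, hCdef,
        Finset.card_image_of_injective _ Sum.inl_injective,
        Finset.card_image_of_injective _
          (fun a b hab => Sum.inl_injective (Sum.inr_injective hab)),
        Finset.card_image_of_injective _
          (fun a b hab => Sum.inr_injective (Sum.inr_injective hab)),
        Finset.card_univ, Finset.card_univ, Fintype.card_fin] at hcard
      omega
    omega

end VertexCover
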